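/- Let A_1, …, A_N be symmetric positive semidefinite N×N real matrices and let e_1, …, e_N be the standard basis vectors of ℝ^N. Then ‖∑_{i=1}^N e_i e_iᵀ A_i‖ ≤ ‖∑_{i=1}^N A_i‖, where ‖·‖ denotes the matrix operator 2-norm. -/

import Mathlib

open scoped InnerProductSpace Matrix

/-- The operator (spectral) 2-norm of a real square matrix. -/
noncomputable def opNorm {N : ℕ} (M : Matrix (Fin N) (Fin N) ℝ) : ℝ :=
  ‖Matrix.toEuclideanCLM (𝕜 := ℝ) M‖

private lemma L1 {N : ℕ} (C : Matrix (Fin N) (Fin N) ℝ) (y : Fin N → ℝ) :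
    ∑ j, y j * ((Cᴴ * C).mulVec y) j = ∑ k, (C.mulVec y) k ^ 2 := by
  rw [← Matrix.mulVec_mulVec]
  simp only [Matrix.mulVec, dotProduct, Matrix.conjTranspose_apply, star_trivial,
    Finset.mul_sum, sq]
  rw [Finset.sum_comm]
  refine Finset.sum_congr rfl fun k _ => ?_
  rw [Finset.sum_comm]
  refine Finset.sum_congr rfl fun i _ => ?_
  rw [Finset.sum_mul]
  exact Finset.sum_congr rfl fun x _ => by ring

private lemma L2 {N : ℕ} (C : Matrix (Fin N) (Fin N) ℝ) (y : Fin N → ℝ) (c : ℝ) (i : Fin N) :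
    c * ((Cᴴ * C).mulVec y) i = ∑ k, (c * C k i) * (C.mulVec y) k := by
  rw [← Matrix.mulVec_mulVec]
  simp only [Matrix.mulVec, dotProduct, Matrix.conjTranspose_apply, star_trivial,
    Finset.mul_sum]
  refine Finset.sum_congr rfl fun k _ => ?_
  exact Finset.sum_congr rfl fun x _ => by ring

private lemma L3 {N : ℕ} (A : Fin N → Matrix (Fin N) (Fin N) ℝ) (y : Fin N → ℝ) (i : Fin N) :
    ((∑ k, Matrix.single k k (1:ℝ) * A k).mulVec y) i = ((A i).mulVec y) i := by
  simp only [Matrix.mulVec, dotProduct, Matrix.sum_apply, Matrix.mul_apply,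
    Matrix.single, Matrix.of_apply, Finset.sum_mul]
  rw [Finset.sum_comm]
  rw [Finset.sum_eq_single i]
  · refine Finset.sum_congr rfl fun j _ => ?_
    simp
  · intro b _ hb
    refine Finset.sum_eq_zero fun j _ => ?_
    refine Finset.sum_eq_zero fun l _ => ?_
    simp [hb]
  · simp

private lemma L4 {N : ℕ} (A : Fin N → Matrix (Fin N) (Fin N) ℝ) (y : Fin N → ℝ) :
    ∑ i, ∑ j, y j * ((A i).mulVec y) j = ∑ j, y j * ((∑ i, A i).mulVec y) j := by
  rw [Finset.sum_comm]
  refine Finset.sum_congr rfl fun j _ => ?_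
  rw [← Finset.mul_sum]
  congr 1
  simp only [Matrix.mulVec, dotProduct, Matrix.sum_apply, Finset.sum_mul]
  rw [Finset.sum_comm]

/-- Key pointwise inner-product formula. -/
private lemma inner_toEuclideanCLM {N : ℕ} (B : Matrix (Fin N) (Fin N) ℝ)
    (x y : EuclideanSpace ℝ (Fin N)) :
    ⟪x, (Matrix.toEuclideanCLM (𝕜 := ℝ) B) y⟫_ℝ = ∑ i, x i * (B.mulVec y) i := by
  simp [PiLp.inner_apply, RCLike.inner_apply]
  exact Finset.sum_congr rfl fun i _ => mul_comm _ _

/-- Quadratic form bound by operator norm. -/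
private lemma quad_le {N : ℕ} (B : Matrix (Fin N) (Fin N) ℝ) (y : EuclideanSpace ℝ (Fin N)) :
    ∑ i, y i * (B.mulVec y) i ≤ opNorm B * ‖y‖ ^ 2 := by
  rw [← inner_toEuclideanCLM]
  calc ⟪y, (Matrix.toEuclideanCLM (𝕜 := ℝ) B) y⟫_ℝ
      ≤ ‖y‖ * ‖(Matrix.toEuclideanCLM (𝕜 := ℝ) B) y‖ := real_inner_le_norm _ _
    _ ≤ ‖y‖ * (opNorm B * ‖y‖) := by
        gcongr
        exact (Matrix.toEuclideanCLM (𝕜 := ℝ) B).le_opNorm y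
    _ = opNorm B * ‖y‖ ^ 2 := by ring

private lemma diag_le_opNorm {N : ℕ} (B : Matrix (Fin N) (Fin N) ℝ) (i : Fin N) :
    B i i ≤ opNorm B := by
  have h := quad_le B (EuclideanSpace.single i 1)
  simp only [EuclideanSpace.norm_single, norm_one, one_pow, mul_one] at h
  refine le_trans (le_of_eq ?_) h
  rw [Finset.sum_eq_single i]
  · simp [Matrix.mulVec, dotProduct, EuclideanSpace.single_apply, mul_comm]
  · intro b _ hb
    simp [EuclideanSpace.single_apply, hb]
  · simp

private lemma diag_nonneg' {N : ℕ} {B : Matrix (Fin N) (Fin N) ℝ} (hB : B.PosSemidef)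
    (i : Fin N) : 0 ≤ B i i := by
  exact hB.diag_nonneg

/-- Cauchy–Schwarz for a PSD matrix, pointwise form. -/
private lemma cs_psd {N : ℕ} {B : Matrix (Fin N) (Fin N) ℝ} (hB : B.PosSemidef)
    (i : Fin N) (c : ℝ) (y : Fin N → ℝ) :
    (c * (B.mulVec y) i) ^ 2 ≤ (c ^ 2 * B i i) * (∑ j, y j * (B.mulVec y) j) := by
  obtain ⟨C, rfl⟩ : ∃ C : Matrix (Fin N) (Fin N) ℝ, B = Cᴴ * C := by
    open MatrixOrder in exact CStarAlgebra.nonneg_iff_eq_star_mul_self.mp hB.nonneg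
  have h2 : (Cᴴ * C) i i = ∑ k, C k i ^ 2 := by
    simp [Matrix.mul_apply, sq]
  rw [L2, L1, h2]
  calc (∑ k, (c * C k i) * (C.mulVec y) k) ^ 2
      ≤ (∑ k, (c * C k i) ^ 2) * (∑ k, (C.mulVec y) k ^ 2) :=
        Finset.sum_mul_sq_le_sq_mul_sq Finset.univ _ _
    _ = (c ^ 2 * ∑ k, C k i ^ 2) * (∑ k, (C.mulVec y) k ^ 2) := by
        congr 1
        rw [Finset.mul_sum]
        exact Finset.sum_congr rfl fun k _ => by ring

/-- For symmetric PSD matrices `A i`, `‖∑ eᵢeᵢᵀ Aᵢ‖ ≤ ‖∑ Aᵢ‖` in operator 2-norm. -/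
theorem stmt1 {N : ℕ} (A : Fin N → Matrix (Fin N) (Fin N) ℝ)
    (hA : ∀ i, (A i).PosSemidef) :
    opNorm (∑ i, Matrix.single i i (1:ℝ) * A i) ≤ opNorm (∑ i, A i) := by
  set M : Matrix (Fin N) (Fin N) ℝ := ∑ i, Matrix.single i i (1:ℝ) * A i with hM
  set S : Matrix (Fin N) (Fin N) ℝ := ∑ i, A i with hS
  have hSd : ∀ i, (A i) i i ≤ opNorm S := by
    intro i
    refine le_trans ?_ (diag_le_opNorm S i)
    have : S i i = ∑ j, (A j) i i := by simp [hS, Matrix.sum_apply]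
    rw [this]
    exact Finset.single_le_sum (f := fun j => (A j) i i)
      (fun j _ => diag_nonneg' (hA j) i) (Finset.mem_univ i)
  have hc : (0:ℝ) ≤ opNorm S := norm_nonneg _
  rw [opNorm, opNorm]
  apply ContinuousLinearMap.opNorm_le_bound _ hc
  intro y
  set T := Matrix.toEuclideanCLM (𝕜 := ℝ) M with hT
  set x : EuclideanSpace ℝ (Fin N) := T y with hx
  show ‖x‖ ≤ _
  rcases eq_or_lt_of_le (norm_nonneg x) with h0 | h0
  · rw [← h0]
    exact mul_nonneg hc (norm_nonneg _)
  have hx2 : ‖x‖ ^ 2 = ∑ i, x i * (M.mulVec y) i := by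
    rw [← real_inner_self_eq_norm_sq, hx, inner_toEuclideanCLM]
  have hxn : ‖x‖ ^ 2 = ∑ i, x i ^ 2 := by
    rw [← real_inner_self_eq_norm_sq]
    simp only [PiLp.inner_apply, RCLike.inner_apply, conj_trivial, sq]
  have key : ‖x‖ ^ 2 ≤ opNorm S * ‖x‖ * ‖y‖ := by
    have step1 : ‖x‖ ^ 2 ≤ ∑ i, Real.sqrt (x i ^ 2 * (A i) i i) *
        Real.sqrt (∑ j, y j * ((A i).mulVec y) j) := by
      rw [hx2]
      apply Finset.sum_le_sum
      intro i _
      rw [hM, L3 A y i, ← Real.sqrt_mul (mul_nonneg (sq_nonneg _) (diag_nonneg' (hA i) i))]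
      calc x i * ((A i).mulVec y) i
          ≤ |x i * ((A i).mulVec y) i| := le_abs_self _
        _ = Real.sqrt ((x i * ((A i).mulVec y) i) ^ 2) := (Real.sqrt_sq_eq_abs _).symm
        _ ≤ Real.sqrt (x i ^ 2 * (A i) i i * ∑ j, y j * ((A i).mulVec y) j) :=
            Real.sqrt_le_sqrt (cs_psd (hA i) i (x i) y)
    have step2 : ∑ i, Real.sqrt (x i ^ 2 * (A i) i i) *
        Real.sqrt (∑ j, y j * ((A i).mulVec y) j) ≤
        Real.sqrt (∑ i, x i ^ 2 * (A i) i i) *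
        Real.sqrt (∑ i, ∑ j, y j * ((A i).mulVec y) j) := by
      apply Real.sum_sqrt_mul_sqrt_le
      · intro i
        exact mul_nonneg (sq_nonneg _) (diag_nonneg' (hA i) i)
      · intro i
        have := (hA i).dotProduct_mulVec_nonneg y.ofLp
        simpa [dotProduct, mul_comm] using this
    have b1 : ∑ i, x i ^ 2 * (A i) i i ≤ opNorm S * ‖x‖ ^ 2 := by
      rw [hxn, Finset.mul_sum]
      apply Finset.sum_le_sum
      intro i _
      rw [mul_comm (opNorm S)]
      exact mul_le_mul_of_nonneg_left (hSd i) (sq_nonneg _)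
    have b2 : ∑ i, ∑ j, y j * ((A i).mulVec y) j ≤ opNorm S * ‖y‖ ^ 2 := by
      rw [L4 A y, ← hS]
      exact quad_le S y
    calc ‖x‖ ^ 2 ≤ _ := step1
      _ ≤ _ := step2
      _ ≤ Real.sqrt (opNorm S * ‖x‖ ^ 2) * Real.sqrt (opNorm S * ‖y‖ ^ 2) := by
          exact mul_le_mul (Real.sqrt_le_sqrt b1) (Real.sqrt_le_sqrt b2)
            (Real.sqrt_nonneg _) (Real.sqrt_nonneg _)
      _ = opNorm S * ‖x‖ * ‖y‖ := by
          rw [Real.sqrt_mul hc, Real.sqrt_mul hc, Real.sqrt_sq (norm_nonneg _),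
            Real.sqrt_sq (norm_nonneg _),
            show Real.sqrt (opNorm S) * ‖x‖ * (Real.sqrt (opNorm S) * ‖y‖) =
              (Real.sqrt (opNorm S) * Real.sqrt (opNorm S)) * ‖x‖ * ‖y‖ by ring,
            Real.mul_self_sqrt hc]
  rw [sq] at key
  calc ‖x‖ = ‖x‖ * ‖x‖ / ‖x‖ := by field_simp
    _ ≤ opNorm S * ‖x‖ * ‖y‖ / ‖x‖ := by gcongr
    _ = opNorm S * ‖y‖ := by field_simp
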